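/- Let u_m^k solve the Lax–Friedrichs scheme (2.1) and v_{m+1}^k solve the Hamilton–Jacobi scheme (2.3), with initial data related by (2.2) and (2.4). Then each solution is derived from the other: if v_{m+1}^k solves (2.3) then u_m^k := D_x v_{m+1}^k solves (2.1); conversely, if u_m^k solves (2.1) then there exists a solution v_{m+1}^k of (2.3) with D_x v_{m+1}^k = u_m^k. In particular D_x v_{m+1}^k = u_m^k for all m and k. -/

import Mathlib

open scoped BigOperators Classical

noncomputable section

/-- Space mesh `Δx = 1/(2N)`. -/
def dx (N : ℕ) : ℝ := 1 / (2 * N)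

/-- Time mesh `Δt = 1/(2K)`. -/
def dt (K : ℕ) : ℝ := 1 / (2 * K)

/-- The discretized initial datum (2.2): `u_Δ^0(x)` is the cell average of `u^0` over
`[x_m - Δx, x_m + Δx)`, where `m = m(x)` is the even integer with `x ∈ [x_m - Δx, x_m + Δx)`. -/
def uD0 (N : ℕ) (u0 : ℝ → ℝ) (x : ℝ) : ℝ :=
  (1 / (2 * dx N)) *
    ∫ y in (((2 * ⌊(x / dx N + 1) / 2⌋ : ℤ) : ℝ) * dx N - dx N)..(((2 * ⌊(x / dx N + 1) / 2⌋ : ℤ) : ℝ) * dx N + dx N),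
      u0 y

/-- The discretized initial datum (2.4): `v_Δ^0(x) = v^0(0) + ∫_0^x u_Δ^0(y) dy`. -/
def vD0 (N : ℕ) (u0 v0 : ℝ → ℝ) (x : ℝ) : ℝ :=
  v0 0 + ∫ y in (0:ℝ)..x, uD0 N u0 y

open MeasureTheory intervalIntegral

namespace LFHJ

def cavg (N : ℕ) (u0 : ℝ → ℝ) (n : ℤ) : ℝ :=
  (1 / (2 * dx N)) *
    ∫ y in (((2 * n : ℤ) : ℝ) * dx N - dx N)..(((2 * n : ℤ) : ℝ) * dx N + dx N), u0 y

lemma uD0_eq_cavg (N : ℕ) (u0 : ℝ → ℝ) (x : ℝ) :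
    uD0 N u0 x = cavg N u0 ⌊(x / dx N + 1) / 2⌋ := rfl

variable {N : ℕ} {u0 : ℝ → ℝ}

lemma dx_pos (hN : 0 < N) : 0 < dx N := by
  have : (0:ℝ) < N := by exact_mod_cast hN
  simp only [dx]; positivity

lemma two_N_dx (hN : 0 < N) : (2 * N : ℝ) * dx N = 1 := by
  have : (N:ℝ) ≠ 0 := by exact_mod_cast hN.ne'
  unfold dx; field_simp

lemma floor_eq (hN : 0 < N) {n : ℤ} {x : ℝ}
    (h1 : (2 * (n:ℝ) - 1) * dx N ≤ x) (h2 : x < (2 * (n:ℝ) + 1) * dx N) :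
    ⌊(x / dx N + 1) / 2⌋ = n := by
  have hdx := dx_pos hN
  rw [Int.floor_eq_iff]
  constructor
  · have h : 2 * (n:ℝ) - 1 ≤ x / dx N := (le_div_iff₀ hdx).mpr (by linarith)
    push_cast; linarith
  · have h : x / dx N < 2 * (n:ℝ) + 1 := (div_lt_iff₀ hdx).mpr (by linarith)
    push_cast; linarith

lemma uD0_on_cell (hN : 0 < N) {n : ℤ} {x : ℝ}
    (h1 : (2 * (n:ℝ) - 1) * dx N ≤ x) (h2 : x < (2 * (n:ℝ) + 1) * dx N) :
    uD0 N u0 x = cavg N u0 n := by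
  rw [uD0_eq_cavg, floor_eq hN h1 h2]

lemma cavg_add_N (hN : 0 < N) (hu0_per : ∀ y, u0 (y + 1) = u0 y) (n : ℤ) :
    cavg N u0 (n + N) = cavg N u0 n := by
  have hshift : ∀ a b : ℝ, (∫ y in (a+1)..(b+1), u0 y) = ∫ y in a..b, u0 y := by
    intro a b
    rw [← intervalIntegral.integral_comp_add_right u0 1]
    simp only [hu0_per]
  have hb : ∀ s : ℝ, ((2 * (n + (N:ℤ)) : ℤ) : ℝ) * dx N + s = (((2 * n : ℤ) : ℝ) * dx N + s) + 1 := by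
    intro s
    have h1 := two_N_dx hN
    push_cast
    nlinarith [h1]
  unfold cavg
  congr 1
  rw [show ((2 * (n + (N:ℤ)) : ℤ) : ℝ) * dx N - dx N = (((2 * n : ℤ) : ℝ) * dx N - dx N) + 1 from by
        have := hb (-dx N); push_cast at this ⊢; linarith,
      show ((2 * (n + (N:ℤ)) : ℤ) : ℝ) * dx N + dx N = (((2 * n : ℤ) : ℝ) * dx N + dx N) + 1 from
        hb (dx N)]
  exact hshift _ _

lemma per_int {p : ℤ → ℝ} (hN : 0 < N) (hp : ∀ n, p (n + N) = p n) (n : ℤ) :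
    p n = p (n % N) := by
  have key : ∀ (q : ℤ) (r : ℤ), p (r + N * q) = p r := by
    intro q
    induction q using Int.induction_on with
    | zero => intro r; simp
    | succ q ih =>
        intro r
        rw [show r + (N:ℤ) * (q + 1) = (r + N * q) + N from by ring, hp, ih]
    | pred q ih =>
        intro r
        have h := hp (r + N * (-(q:ℤ) - 1))
        rw [show r + (N:ℤ) * (-(q:ℤ) - 1) + N = r + N * (-(q:ℤ)) from by ring] at h
        rw [← h]
        exact ih r
  have h2 := key (n / N) (n % N)
  rw [Int.emod_add_mul_ediv n N] at h2
  exact h2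

lemma cavg_mod (hN : 0 < N) (hu0_per : ∀ y, u0 (y + 1) = u0 y) (n : ℤ) :
    cavg N u0 n = cavg N u0 (n % N) :=
  per_int hN (cavg_add_N hN hu0_per) n

lemma uD0_per (hN : 0 < N) (hu0_per : ∀ y, u0 (y + 1) = u0 y) (x : ℝ) :
    uD0 N u0 (x + 1) = uD0 N u0 x := by
  have hNr : (N:ℝ) ≠ 0 := by exact_mod_cast hN.ne'
  rw [uD0_eq_cavg, uD0_eq_cavg]
  have e : ((x + 1) / dx N + 1) / 2 = (x / dx N + 1) / 2 + (N:ℤ) := by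
    simp only [dx]; push_cast; field_simp; ring
  rw [e, Int.floor_add_intCast]
  exact cavg_add_N hN hu0_per _

lemma uD0_bounded (hN : 0 < N) (hu0_per : ∀ y, u0 (y + 1) = u0 y) :
    ∃ M : ℝ, ∀ x, |uD0 N u0 x| ≤ M := by
  have hs : (Finset.range N).Nonempty := ⟨0, Finset.mem_range.mpr hN⟩
  refine ⟨(Finset.range N).sup' hs (fun i => |cavg N u0 (i:ℤ)|), fun x => ?_⟩
  rw [uD0_eq_cavg, cavg_mod hN hu0_per]
  set n : ℤ := ⌊(x / dx N + 1) / 2⌋ % (N:ℤ) with hn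
  have h0 : 0 ≤ n := Int.emod_nonneg _ (by exact_mod_cast hN.ne')
  have hlt : n < (N:ℤ) := Int.emod_lt_of_pos _ (by exact_mod_cast hN)
  have he : n = ((n.toNat : ℕ) : ℤ) := (Int.toNat_of_nonneg h0).symm
  have hmem : n.toNat ∈ Finset.range N := Finset.mem_range.mpr (by omega)
  rw [he]
  exact Finset.le_sup' (fun i : ℕ => |cavg N u0 (i:ℤ)|) hmem

lemma uD0_meas : Measurable (uD0 N u0) := by
  have h : uD0 N u0 = (fun n : ℤ => cavg N u0 n) ∘ (fun x : ℝ => ⌊(x / dx N + 1) / 2⌋) := rfl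
  rw [h]
  exact measurable_from_top.comp
    (((measurable_id.div_const (dx N)).add_const 1).div_const 2).floor

lemma uD0_intInt (hN : 0 < N) (hu0_per : ∀ y, u0 (y + 1) = u0 y) (a b : ℝ) :
    IntervalIntegrable (uD0 N u0) volume a b := by
  obtain ⟨M, hM⟩ := uD0_bounded hN hu0_per
  rw [intervalIntegrable_iff]
  refine Integrable.mono' (g := fun _ => M) ?_ uD0_meas.aestronglyMeasurable.restrict ?_
  · refine (integrableOn_const_iff enorm_ne_top).mpr (Or.inr ?_)
    rw [Set.uIoc]
    exact measure_Ioc_lt_top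
  · filter_upwards with y
    simpa [Real.norm_eq_abs] using hM y

lemma integral_uD0_cell (hN : 0 < N) (n : ℤ) :
    (∫ y in ((2 * (n:ℝ)) * dx N - dx N)..((2 * (n:ℝ)) * dx N + dx N), uD0 N u0 y)
      = ∫ y in ((2 * (n:ℝ)) * dx N - dx N)..((2 * (n:ℝ)) * dx N + dx N), u0 y := by
  have hdx := dx_pos hN
  set a := (2 * (n:ℝ)) * dx N - dx N with ha
  set b := (2 * (n:ℝ)) * dx N + dx N with hb
  have hab : a ≤ b := by rw [ha, hb]; linarith
  have h1 : (∫ y in a..b, uD0 N u0 y) = ∫ y in a..b, cavg N u0 n := by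
    apply intervalIntegral.integral_congr_ae
    have h0 : ({b} : Set ℝ)ᶜ ∈ MeasureTheory.ae volume :=
      compl_mem_ae_iff.mpr (measure_singleton b)
    filter_upwards [h0] with y hy hyI
    rw [Set.uIoc_of_le hab] at hyI
    have hyb : y ≠ b := hy
    apply uD0_on_cell hN
    · rw [ha] at hyI; linarith [hyI.1]
    · rw [hb] at hyI
      rcases lt_of_le_of_ne hyI.2 hyb with h
      linarith
  rw [h1, intervalIntegral.integral_const]
  have : b - a = 2 * dx N := by rw [ha, hb]; ring
  rw [this, smul_eq_mul]
  have hcv : cavg N u0 n = (1 / (2 * dx N)) * ∫ y in a..b, u0 y := by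
    rw [cavg, ha, hb]; push_cast; ring_nf
  rw [hcv]
  field_simp

lemma integral_uD0_unit (hN : 0 < N) (hu0_per : ∀ y, u0 (y + 1) = u0 y)
    (hu0_int : ∀ a b : ℝ, IntervalIntegrable u0 MeasureTheory.volume a b)
    (hu0_mean : (∫ y in (0:ℝ)..1, u0 y) = 0) (t : ℝ) :
    (∫ y in t..(t+1), uD0 N u0 y) = 0 := by
  have hper : Function.Periodic (uD0 N u0) 1 := fun x => uD0_per hN hu0_per x
  have hper0 : Function.Periodic u0 1 := fun x => hu0_per x
  rw [hper.intervalIntegral_add_eq t (-dx N)]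
  set a : ℕ → ℝ := fun i => (2 * (i:ℝ)) * dx N - dx N with haf
  have hsum1 : (∑ i ∈ Finset.range N, ∫ y in a i..a (i+1), uD0 N u0 y)
      = ∫ y in (a 0)..(a N), uD0 N u0 y :=
    intervalIntegral.sum_integral_adjacent_intervals
      (fun i _ => uD0_intInt hN hu0_per _ _)
  have hsum2 : (∑ i ∈ Finset.range N, ∫ y in a i..a (i+1), u0 y)
      = ∫ y in (a 0)..(a N), u0 y :=
    intervalIntegral.sum_integral_adjacent_intervals (fun i _ => hu0_int _ _)
  have hterm : ∀ i : ℕ, (∫ y in a i..a (i+1), uD0 N u0 y) = ∫ y in a i..a (i+1), u0 y := by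
    intro i
    have e1 : a (i+1) = (2 * (i:ℝ)) * dx N + dx N := by rw [haf]; push_cast; ring
    rw [e1]
    have := integral_uD0_cell (u0 := u0) hN (i : ℤ)
    push_cast at this
    rw [haf]
    exact this
  have hEq : (∫ y in (a 0)..(a N), uD0 N u0 y) = ∫ y in (a 0)..(a N), u0 y := by
    rw [← hsum1, ← hsum2]
    exact Finset.sum_congr rfl fun i _ => hterm i
  have ha0 : a 0 = -dx N := by rw [haf]; push_cast; ring
  have haN : a N = -dx N + 1 := by
    rw [haf]
    have := two_N_dx hN
    push_cast
    nlinarith [this]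
  rw [show -dx N + 1 = a N from haN.symm, show -dx N = a 0 from ha0.symm, hEq, ha0, haN,
      hper0.intervalIntegral_add_eq (-dx N) 0]
  simpa using hu0_mean

variable {v0 : ℝ → ℝ}

lemma vD0_per (hN : 0 < N) (hu0_per : ∀ y, u0 (y + 1) = u0 y)
    (hu0_int : ∀ a b : ℝ, IntervalIntegrable u0 MeasureTheory.volume a b)
    (hu0_mean : (∫ y in (0:ℝ)..1, u0 y) = 0) (x : ℝ) :
    vD0 N u0 v0 (x + 1) = vD0 N u0 v0 x := by
  unfold vD0
  rw [← intervalIntegral.integral_add_adjacent_intervals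
        (uD0_intInt hN hu0_per 0 x) (uD0_intInt hN hu0_per x (x+1)),
      integral_uD0_unit hN hu0_per hu0_int hu0_mean x]
  ring

lemma key_init (hN : 0 < N) (hu0_per : ∀ y, u0 (y + 1) = u0 y) (n : ℤ) :
    vD0 N u0 v0 ((2 * (n:ℝ) + 1) * dx N) - vD0 N u0 v0 ((2 * (n:ℝ) - 1) * dx N)
      = 2 * dx N * uD0 N u0 ((2 * (n:ℝ)) * dx N) := by
  have hdx := dx_pos hN
  have hmem : uD0 N u0 ((2 * (n:ℝ)) * dx N) = cavg N u0 n :=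
    uD0_on_cell hN (by nlinarith) (by nlinarith)
  have hsplit : vD0 N u0 v0 ((2 * (n:ℝ) + 1) * dx N) - vD0 N u0 v0 ((2 * (n:ℝ) - 1) * dx N)
      = ∫ y in ((2 * (n:ℝ) - 1) * dx N)..((2 * (n:ℝ) + 1) * dx N), uD0 N u0 y := by
    unfold vD0
    rw [← intervalIntegral.integral_add_adjacent_intervals
          (uD0_intInt hN hu0_per 0 ((2 * (n:ℝ) - 1) * dx N))
          (uD0_intInt hN hu0_per ((2 * (n:ℝ) - 1) * dx N) ((2 * (n:ℝ) + 1) * dx N))]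
    ring
  rw [hsplit,
      show (2 * (n:ℝ) - 1) * dx N = (2 * (n:ℝ)) * dx N - dx N from by ring,
      show (2 * (n:ℝ) + 1) * dx N = (2 * (n:ℝ)) * dx N + dx N from by ring,
      integral_uD0_cell hN n, hmem]
  rw [cavg]
  push_cast
  field_simp




lemma key_init' (hN : 0 < N) (hu0_per : ∀ y, u0 (y + 1) = u0 y) {m : ℤ} (hm : Even m) :
    (vD0 N u0 v0 (((m:ℝ) + 1) * dx N) - vD0 N u0 v0 (((m:ℝ) - 1) * dx N)) / (2 * dx N)
      = uD0 N u0 ((m:ℝ) * dx N) := by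
  obtain ⟨n, rfl⟩ := hm
  have h := key_init (v0 := v0) hN hu0_per n
  have hdx := dx_pos hN
  rw [show ((n + n : ℤ):ℝ) + 1 = 2 * (n:ℝ) + 1 from by push_cast; ring,
      show ((n + n : ℤ):ℝ) - 1 = 2 * (n:ℝ) - 1 from by push_cast; ring,
      show ((n + n : ℤ):ℝ) = 2 * (n:ℝ) from by push_cast; ring, h]
  field_simp

end LFHJ

/-- `u` solves the Lax–Friedrichs scheme (2.1) on the even grid, with initial datum
`u_m^0 = uinit(x_m)` and `2N`-periodicity. -/
def SolvesLF (N K : ℕ) (H : ℝ → ℝ → ℝ → ℝ) (c : ℝ) (uinit : ℝ → ℝ) (u : ℤ → ℕ → ℝ) : Prop :=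
  (∀ m : ℤ, Even m → u m 0 = uinit ((m : ℝ) * dx N)) ∧
  (∀ (m : ℤ) (k : ℕ), u (m + 2 * N) k = u m k) ∧
  (∀ (m : ℤ) (k : ℕ), Even (m + (k : ℤ)) →
    (u (m + 1) (k + 1) - (u m k + u (m + 2) k) / 2) / dt K
      + (H (((m : ℝ) + 2) * dx N) ((k : ℝ) * dt K) (c + u (m + 2) k)
          - H ((m : ℝ) * dx N) ((k : ℝ) * dt K) (c + u m k)) / (2 * dx N) = 0)

/-- `v` solves the Hamilton–Jacobi scheme (2.3) on the odd grid, with initial datum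
`v_{m+1}^0 = vinit(x_{m+1})` and `2N`-periodicity. -/
def SolvesHJ (N K : ℕ) (H : ℝ → ℝ → ℝ → ℝ) (c hc : ℝ) (vinit : ℝ → ℝ) (v : ℤ → ℕ → ℝ) : Prop :=
  (∀ m : ℤ, Odd m → v m 0 = vinit ((m : ℝ) * dx N)) ∧
  (∀ (m : ℤ) (k : ℕ), v (m + 2 * N) k = v m k) ∧
  (∀ (m : ℤ) (k : ℕ), Even (m + (k : ℤ)) →
    (v m (k + 1) - (v (m - 1) k + v (m + 1) k) / 2) / dt K
      + H ((m : ℝ) * dx N) ((k : ℝ) * dt K) (c + (v (m + 1) k - v (m - 1) k) / (2 * dx N)) = hc)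

/-- Proposition 2.1: with initial data related by (2.2) and (2.4), the
Lax–Friedrichs scheme (2.1) and the Hamilton–Jacobi scheme (2.3) are equivalent: from a
solution `v` of (2.3) the function `D_x v_{m+1}^k` solves (2.1); conversely every solution
`u` of (2.1) arises as `D_x v_{m+1}^k` for some solution `v` of (2.3). -/
theorem lax_friedrichs_hamilton_jacobi_equivalence
    (N K : ℕ) (hN : 0 < N) (hK : 0 < K)
    (H : ℝ → ℝ → ℝ → ℝ)
    (hH_C2 : ContDiff ℝ 2 (fun q : ℝ × ℝ × ℝ => H q.1 q.2.1 q.2.2))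
    (hH_perx : ∀ x t p, H (x + 1) t p = H x t p)
    (hH_pert : ∀ x t p, H x (t + 1) p = H x t p)
    (c0 c1 c : ℝ) (hc : c ∈ Set.Icc c0 c1) (hFun : ℝ → ℝ)
    (u0 v0 : ℝ → ℝ)
    (hu0_int : ∀ a b : ℝ, IntervalIntegrable u0 MeasureTheory.volume a b)
    (hu0_per : ∀ y, u0 (y + 1) = u0 y)
    (hu0_mean : (∫ y in (0:ℝ)..1, u0 y) = 0)
    (hv0_lip : ∃ C : NNReal, LipschitzWith C v0)
    (hv0_per : ∀ y, v0 (y + 1) = v0 y)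
    (hv0_deriv : ∀ x, v0 x = v0 0 + ∫ y in (0:ℝ)..x, u0 y) :
    (∀ v : ℤ → ℕ → ℝ, SolvesHJ N K H c (hFun c) (vD0 N u0 v0) v →
        SolvesLF N K H c (uD0 N u0)
          (fun m k => (v (m + 1) k - v (m - 1) k) / (2 * dx N))) ∧
    (∀ u : ℤ → ℕ → ℝ, SolvesLF N K H c (uD0 N u0) u →
        ∃ v : ℤ → ℕ → ℝ, SolvesHJ N K H c (hFun c) (vD0 N u0 v0) v ∧
          ∀ (m : ℤ) (k : ℕ), Even (m + (k : ℤ)) →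
            (v (m + 1) k - v (m - 1) k) / (2 * dx N) = u m k) := by
  have hdx := LFHJ.dx_pos hN
  have hdt : (0:ℝ) < dt K := by
    have : (0:ℝ) < K := by exact_mod_cast hK
    simp only [dt]; positivity
  have hdtne : dt K ≠ 0 := hdt.ne'
  have hkey : ∀ m : ℤ, Even m →
      (vD0 N u0 v0 (((m:ℝ) + 1) * dx N) - vD0 N u0 v0 (((m:ℝ) - 1) * dx N)) / (2 * dx N)
        = uD0 N u0 ((m:ℝ) * dx N) := fun m hm => LFHJ.key_init' hN hu0_per hm
  constructor
  · rintro v ⟨hv0i, hvper, hvS⟩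
    refine ⟨?_, ?_, ?_⟩
    · intro m hm
      show (v (m+1) 0 - v (m-1) 0) / (2 * dx N) = uD0 N u0 ((m:ℝ) * dx N)
      rw [hv0i (m+1) hm.add_one, hv0i (m-1) (hm.sub_odd odd_one)]
      push_cast
      exact hkey m hm
    · intro m k
      show (v (m + 2*N + 1) k - v (m + 2*N - 1) k) / (2 * dx N)
          = (v (m+1) k - v (m-1) k) / (2 * dx N)
      rw [show m + 2*(N:ℤ) + 1 = (m+1) + 2*N from by ring,
          show m + 2*(N:ℤ) - 1 = (m-1) + 2*N from by ring, hvper, hvper]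
    · intro m k hmk
      have h1 := hvS m k hmk
      have h2 := hvS (m+2) k (by obtain ⟨n, hn⟩ := hmk; exact ⟨n+1, by omega⟩)
      rw [show m+2+1 = m+3 from by ring, show m+2-1 = m+1 from by ring] at h2
      push_cast at h2
      show ((v (m+1+1) (k+1) - v (m+1-1) (k+1)) / (2 * dx N)
          - ((v (m+1) k - v (m-1) k) / (2 * dx N)
              + (v (m+2+1) k - v (m+2-1) k) / (2 * dx N)) / 2) / dt K
        + (H (((m:ℝ) + 2) * dx N) ((k:ℝ) * dt K)
              (c + (v (m+2+1) k - v (m+2-1) k) / (2 * dx N))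
          - H ((m:ℝ) * dx N) ((k:ℝ) * dt K)
              (c + (v (m+1) k - v (m-1) k) / (2 * dx N))) / (2 * dx N) = 0
      rw [show m+1+1 = m+2 from by ring, show m+1-1 = m from by ring,
          show m+2+1 = m+3 from by ring, show m+2-1 = m+1 from by ring]
      linear_combination (h2 - h1) / (2 * dx N)
  · rintro u ⟨hu0i, huper, huS⟩
    let w : ℕ → ℤ → ℝ := fun k =>
      Nat.rec (motive := fun _ => ℤ → ℝ)
        (fun m : ℤ => vD0 N u0 v0 ((m:ℝ) * dx N))
        (fun k vk m => (vk (m-1) + vk (m+1)) / 2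
          + dt K * (hFun c - H ((m:ℝ) * dx N) ((k:ℝ) * dt K)
              (c + (vk (m+1) - vk (m-1)) / (2 * dx N)))) k
    have hw0 : ∀ m : ℤ, w 0 m = vD0 N u0 v0 ((m:ℝ) * dx N) := fun _ => rfl
    have hwS : ∀ (k : ℕ) (m : ℤ), w (k+1) m = (w k (m-1) + w k (m+1)) / 2
        + dt K * (hFun c - H ((m:ℝ) * dx N) ((k:ℝ) * dt K)
            (c + (w k (m+1) - w k (m-1)) / (2 * dx N))) := fun _ _ => rfl
    have hper : ∀ (k : ℕ) (m : ℤ), w k (m + 2*N) = w k m := by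
      intro k
      induction k with
      | zero =>
          intro m
          rw [hw0, hw0,
              show ((m + 2*(N:ℤ) : ℤ):ℝ) * dx N = (m:ℝ) * dx N + 1 from by
                push_cast; linear_combination LFHJ.two_N_dx hN,
              LFHJ.vD0_per hN hu0_per hu0_int hu0_mean]
      | succ k ih =>
          intro m
          rw [hwS, hwS,
              show m + 2*(N:ℤ) - 1 = (m-1) + 2*N from by ring,
              show m + 2*(N:ℤ) + 1 = (m+1) + 2*N from by ring, ih, ih,
              show ((m + 2*(N:ℤ) : ℤ):ℝ) * dx N = (m:ℝ) * dx N + 1 from by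
                push_cast; linear_combination LFHJ.two_N_dx hN,
              hH_perx]
    have main : ∀ (k : ℕ) (m : ℤ), Even (m + (k:ℤ)) →
        (w k (m+1) - w k (m-1)) / (2 * dx N) = u m k := by
      intro k
      induction k with
      | zero =>
          intro m hm
          have hme : Even m := by simpa using hm
          rw [hw0, hw0, hu0i m hme]
          push_cast
          exact hkey m hme
      | succ k ih =>
          intro m hm
          have hm' : Even (m + (k:ℤ) + 1) := by push_cast at hm; convert hm using 1; ring
          have hm1 : Even ((m-1) + (k:ℤ)) := by
            obtain ⟨n, hn⟩ := hm'; exact ⟨n-1, by omega⟩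
          have hm2 : Even ((m+1) + (k:ℤ)) := by
            obtain ⟨n, hn⟩ := hm'; exact ⟨n, by omega⟩
          have hIH1 := ih (m+1) hm2
          have hIH2 := ih (m-1) hm1
          rw [show m+1+1 = m+2 from by ring, show m+1-1 = m from by ring] at hIH1
          rw [show m-1+1 = m from by ring, show m-1-1 = m-2 from by ring] at hIH2
          have hL := huS (m-1) k hm1
          rw [show m-1+1 = m from by ring, show m-1+2 = m+1 from by ring] at hL
          rw [show ((m-1:ℤ):ℝ) = (m:ℝ) - 1 from by push_cast; ring] at hL
          rw [hwS, hwS,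
              show m+1+1 = m+2 from by ring, show m+1-1 = m from by ring,
              show m-1+1 = m from by ring, show m-1-1 = m-2 from by ring,
              show c + (w k (m+2) - w k m) / (2 * dx N) = c + u (m+1) k from by rw [hIH1],
              show c + (w k m - w k (m-2)) / (2 * dx N) = c + u (m-1) k from by rw [hIH2],
              show ((m+1:ℤ):ℝ) = (m:ℝ) + 1 from by push_cast; ring,
              show ((m-1:ℤ):ℝ) = (m:ℝ) - 1 from by push_cast; ring]
          rw [show (m:ℝ) - 1 + 2 = (m:ℝ) + 1 from by ring] at hL
          have hE : u m (k+1) - (u (m-1) k + u (m+1) k) / 2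
              = (H (((m:ℝ) - 1) * dx N) ((k:ℝ) * dt K) (c + u (m-1) k)
                  - H (((m:ℝ) + 1) * dx N) ((k:ℝ) * dt K) (c + u (m+1) k)) / (2 * dx N) * dt K := by
            apply (div_eq_iff hdtne).mp
            linear_combination hL
          push_cast
          linear_combination (hIH1 + hIH2) / 2 - hE
    refine ⟨fun m k => w k m, ⟨fun m _ => rfl, fun m k => hper k m, ?_⟩, fun m k hmk => main k m hmk⟩
    intro m k _
    show (w (k+1) m - (w k (m-1) + w k (m+1)) / 2) / dt K
        + H ((m:ℝ) * dx N) ((k:ℝ) * dt K) (c + (w k (m+1) - w k (m-1)) / (2 * dx N)) = hFun c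
    rw [hwS]
    field_simp
    ring
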